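/- Let H be a hypergroup with left Haar measure λ, and let χ₀ be a strictly positive continuous character on H. Define a new convolution by (x ∘ y) := (χ₀ / χ₀(x·y)) (x·y) (renormalized by χ₀) with Haar measure λ' = χ₀² λ. Then for every f ∈ C_c(H): f ∘_{λ'} f^* = ((χ₀ f) ·_λ (χ₀ f)^*)/χ₀. Consequently, v is a (reduced) positive definite function for (H, ∘, λ') if and only if χ₀ v is a (reduced) positive definite function for (H, ·, λ). -/

import Mathlib

open MeasureTheory
open scoped ComplexOrder

/-- Hypergroup convolution of functions: `(f ·_λ g)(x) = ∫ f(y) g(ỹ · x) dλ(y)`, where the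
point convolution `ỹ · x` is the measure `m (invol y) x`. -/
noncomputable def hconv {Hy : Type*} [MeasurableSpace Hy]
    (m : Hy → Hy → Measure Hy) (lam : Measure Hy) (invol : Hy → Hy)
    (f g : Hy → ℂ) : Hy → ℂ :=
  fun x => ∫ y, f y * ∫ z, g z ∂(m (invol y) x) ∂lam

/-- The involution `f^*(x) = conj f(x̃)` (the modular function is `1` on a commutative
hypergroup). -/
def fstar {Hy : Type*} (invol : Hy → Hy) (f : Hy → ℂ) : Hy → ℂ :=
  fun x => starRingEnd ℂ (f (invol x))

/-- `v` is a reduced positive definite function for the hypergroup structure given by the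
point convolutions `m`, Haar measure `lam` and involution `invol`:
`⟨v, f ∗ f^*⟩ ≥ 0` for all `f ∈ C_c(H)`. -/
def IsRPD {Hy : Type*} [TopologicalSpace Hy] [MeasurableSpace Hy]
    (m : Hy → Hy → Measure Hy) (lam : Measure Hy) (invol : Hy → Hy) (v : Hy → ℂ) : Prop :=
  ∀ f : Hy → ℂ, Continuous f → HasCompactSupport f →
    0 ≤ ∫ x, v x * hconv m lam invol f (fstar invol f) x ∂lam

open scoped NNReal ENNReal

lemma myInt {Hy : Type*} [MeasurableSpace Hy] (μ : Measure Hy) (h : Hy → ℝ)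
    (hm : Measurable h) (hpos : ∀ x, 0 ≤ h x) (g : Hy → ℂ) :
    ∫ z, g z ∂(μ.withDensity fun z => ENNReal.ofReal (h z))
      = ∫ z, (h z : ℂ) * g z ∂μ := by
  rw [show (fun z => ENNReal.ofReal (h z)) = fun z => ((h z).toNNReal : ℝ≥0∞) from rfl,
    integral_withDensity_eq_integral_smul hm.real_toNNReal g]
  refine integral_congr_ae (Filter.Eventually.of_forall fun z => ?_)
  simp only [NNReal.smul_def, Real.coe_toNNReal _ (hpos z), Complex.real_smul]

/-- Renormalizing a commutative hypergroup by a strictly positive character `χ₀`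
(`x ∘ y := (χ₀/χ₀(x·y)) (x·y)`, Haar measure `λ' = χ₀² λ`) satisfies
`f ∘_{λ'} f^* = ((χ₀ f) ·_λ (χ₀ f)^*)/χ₀` for `f ∈ C_c(H)`; consequently `v` is reduced
positive definite for `(H, ∘, λ')` iff `χ₀ v` is reduced positive definite for `(H, ·, λ)`. -/
theorem stmt16 {Hy : Type*} [TopologicalSpace Hy] [T2Space Hy] [LocallyCompactSpace Hy]
    [MeasurableSpace Hy] [BorelSpace Hy]
    (m m' : Hy → Hy → Measure Hy) (lam lam' : Measure Hy)
    (invol : Hy → Hy) (hinvol_cont : Continuous invol)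
    (hinvol : ∀ x, invol (invol x) = x)
    (χ₀ : Hy → ℝ) (hχ_cont : Continuous χ₀) (hχ_pos : ∀ x, 0 < χ₀ x)
    (hχ_char : ∀ x y : Hy, ∫ z, χ₀ z ∂(m x y) = χ₀ x * χ₀ y)
    (hχ_inv : ∀ x, χ₀ (invol x) = χ₀ x)
    (hlam' : lam' = lam.withDensity fun x => ENNReal.ofReal ((χ₀ x) ^ 2))
    (hm' : ∀ x y : Hy,
      m' x y = (m x y).withDensity fun z => ENNReal.ofReal (χ₀ z / (χ₀ x * χ₀ y))) :
    (∀ f : Hy → ℂ, Continuous f → HasCompactSupport f → ∀ x : Hy,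
      hconv m' lam' invol f (fstar invol f) x =
        hconv m lam invol (fun y => (χ₀ y : ℂ) * f y)
          (fstar invol fun y => (χ₀ y : ℂ) * f y) x / (χ₀ x : ℂ)) ∧
    (∀ v : Hy → ℂ,
      IsRPD m' lam' invol v ↔ IsRPD m lam invol fun x => (χ₀ x : ℂ) * v x) := by
  have hne : ∀ x, ((χ₀ x : ℂ)) ≠ 0 := fun x => by
    exact_mod_cast Complex.ofReal_ne_zero.mpr (hχ_pos x).ne'
  have key : ∀ (f : Hy → ℂ) (x : Hy),
      hconv m' lam' invol f (fstar invol f) x =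
        hconv m lam invol (fun y => (χ₀ y : ℂ) * f y)
          (fstar invol fun y => (χ₀ y : ℂ) * f y) x / (χ₀ x : ℂ) := by
    intro f x
    unfold hconv fstar
    rw [hlam', myInt lam (fun x => χ₀ x ^ 2) (hχ_cont.pow 2).measurable (fun y => sq_nonneg _),
      ← integral_div]
    refine integral_congr_ae (Filter.Eventually.of_forall fun y => ?_)
    dsimp only
    rw [hm' (invol y) x,
      myInt _ _ (hχ_cont.measurable.div_const _)
        (fun z => div_nonneg (hχ_pos z).le (mul_pos (hχ_pos _) (hχ_pos x)).le)]
    simp only [map_mul, Complex.conj_ofReal, hχ_inv]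
    have h1 : ∀ z : Hy, ((χ₀ z / (χ₀ y * χ₀ x) : ℝ) : ℂ) * starRingEnd ℂ (f (invol z))
        = ((χ₀ z : ℂ) * starRingEnd ℂ (f (invol z))) / ((χ₀ y : ℂ) * (χ₀ x : ℂ)) := by
      intro z; push_cast; ring
    simp only [h1, integral_div]
    push_cast
    field_simp [hne x, hne y]
  refine ⟨fun f _ _ x => key f x, fun v => ?_⟩
  have eqint : ∀ f : Hy → ℂ,
      ∫ x, v x * hconv m' lam' invol f (fstar invol f) x ∂lam'
        = ∫ x, ((χ₀ x : ℂ) * v x) * hconv m lam invol (fun y => (χ₀ y : ℂ) * f y)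
            (fstar invol fun y => (χ₀ y : ℂ) * f y) x ∂lam := by
    intro f
    simp_rw [key f]
    rw [hlam', myInt lam (fun x => χ₀ x ^ 2) (hχ_cont.pow 2).measurable (fun y => sq_nonneg _)]
    refine integral_congr_ae (Filter.Eventually.of_forall fun x => ?_)
    dsimp only
    push_cast
    field_simp [hne x]
  constructor
  · intro h g hgc hgs
    have hfc : Continuous fun y => g y / (χ₀ y : ℂ) :=
      hgc.div (Complex.continuous_ofReal.comp hχ_cont) hne
    have hfs : HasCompactSupport fun y => g y / (χ₀ y : ℂ) := by
      have : (fun y => g y / (χ₀ y : ℂ)) = g * fun y => ((χ₀ y : ℂ))⁻¹ := by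
        funext y; simp [div_eq_mul_inv]
      rw [this]
      exact hgs.mul_right
    have h0 := h _ hfc hfs
    rw [eqint] at h0
    have hg : (fun y => (χ₀ y : ℂ) * (g y / (χ₀ y : ℂ))) = g := by
      funext y; rw [mul_comm, div_mul_cancel₀ _ (hne y)]
    rwa [hg] at h0
  · intro h f hfc hfs
    rw [eqint f]
    exact h _ ((Complex.continuous_ofReal.comp hχ_cont).mul hfc) hfs.mul_left
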